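/- arXiv:1412.5484 — 8 statements merged into one kernel-verified Lean document; each statement's English description precedes it below -/
import Mathlib

section
/- Let β ≥ 0 and ε₀ be real numbers, and let d : ZMod N → ℤ be a discrepancy function with |{x : d x ≠ 0}| ≥ ε₀·N. If |{x : d x < 0}| ≤ (ε₀/2 − β)·N or |{x : d x > 0}| ≤ (ε₀/2 − β)·N, then |{x : d x + d (−x) ≠ 0}| ≥ 2β·N. -/
open Finset

lemma key_aux {M : ℕ} [NeZero M] (d : ZMod M → ℤ) :
    (univ.filter fun x : ZMod M => 0 < d x).card ≤
      (univ.filter fun x : ZMod M => d x + d (-x) ≠ 0).card +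
      (univ.filter fun x : ZMod M => d x < 0).card := by
  have hsub : (univ.filter fun x : ZMod M => 0 < d x) ⊆
      (univ.filter fun x : ZMod M => d x + d (-x) ≠ 0) ∪
      ((univ.filter fun x : ZMod M => d x < 0).image (fun x => -x)) := by
    intro x hx
    simp only [mem_filter, mem_univ, true_and] at hx
    by_cases hb : d x + d (-x) ≠ 0
    · exact mem_union_left _ (by simp [hb])
    · push_neg at hb
      refine mem_union_right _ (mem_image.mpr ⟨-x, ?_, by simp⟩)
      simp only [mem_filter, mem_univ, true_and]
      omega
  refine (card_le_card hsub).trans ((card_union_le _ _).trans ?_)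
  exact Nat.add_le_add_left card_image_le _


theorem stmt_0 (n : ℕ) (β ε₀ : ℝ) (hβ : 0 ≤ β) (d : ZMod (2 ^ n) → ℤ)
    (herr : ((Finset.univ.filter fun x : ZMod (2 ^ n) => d x ≠ 0).card : ℝ) ≥ ε₀ * 2 ^ n)
    (hside : ((Finset.univ.filter fun x : ZMod (2 ^ n) => d x < 0).card : ℝ) ≤ (ε₀ / 2 - β) * 2 ^ n ∨
             ((Finset.univ.filter fun x : ZMod (2 ^ n) => 0 < d x).card : ℝ) ≤ (ε₀ / 2 - β) * 2 ^ n) :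
    ((Finset.univ.filter fun x : ZMod (2 ^ n) => d x + d (-x) ≠ 0).card : ℝ) ≥ 2 * β * 2 ^ n := by
  have hsplit : (Finset.univ.filter fun x : ZMod (2 ^ n) => d x ≠ 0).card =
      (Finset.univ.filter fun x : ZMod (2 ^ n) => d x < 0).card +
      (Finset.univ.filter fun x : ZMod (2 ^ n) => 0 < d x).card := by
    rw [← card_union_of_disjoint, ← filter_or]
    · apply congrArg
      apply filter_congr
      intro x _
      constructor <;> intro h <;> omega
    · rw [disjoint_filter]
      intro x _ h
      omega
  have h1 := key_aux d
  have h2 := key_aux (fun x => -d x)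
  simp only [neg_pos, neg_lt_zero, neg_add_rev (G := ℤ)] at h2
  have heq : (univ.filter fun x : ZMod (2 ^ n) => -d x + -d (-x) ≠ 0) =
      (univ.filter fun x : ZMod (2 ^ n) => d x + d (-x) ≠ 0) := by
    apply filter_congr
    intro x _
    constructor <;> intro h <;> omega
  rw [heq] at h2
  have h2' := h2
  have c1 := (Nat.cast_le (α := ℝ)).mpr h1
  have c2 := (Nat.cast_le (α := ℝ)).mpr h2'
  have c3 : ((Finset.univ.filter fun x : ZMod (2 ^ n) => d x ≠ 0).card : ℝ) =
      (Finset.univ.filter fun x : ZMod (2 ^ n) => d x < 0).card +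
      (Finset.univ.filter fun x : ZMod (2 ^ n) => 0 < d x).card := by
    rw [hsplit]; push_cast; ring
  push_cast at c1 c2
  rcases hside with h | h <;> linarith
end

section
/- Let β ≥ 0 and ε₀ be real numbers, and let d : ZMod N → ℤ be a discrepancy function with |{x : d x ≠ 0}| = ε₀·N. If |{x : d x + d (−x) ≠ 0}| < 2β·N, then (ε₀/2 − β)·N < |{x : d x > 0}| < (ε₀/2 + β)·N and (ε₀/2 − β)·N < |{x : d x < 0}| < (ε₀/2 + β)·N. -/
theorem stmt_1 (n : ℕ) (β ε₀ : ℝ) (hβ : 0 ≤ β) (d : ZMod (2 ^ n) → ℤ)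
    (herr : ((Finset.univ.filter fun x : ZMod (2 ^ n) => d x ≠ 0).card : ℝ) = ε₀ * 2 ^ n)
    (hpass : ((Finset.univ.filter fun x : ZMod (2 ^ n) => d x + d (-x) ≠ 0).card : ℝ) < 2 * β * 2 ^ n) :
    ((ε₀ / 2 - β) * 2 ^ n < ((Finset.univ.filter fun x : ZMod (2 ^ n) => 0 < d x).card : ℝ) ∧
      ((Finset.univ.filter fun x : ZMod (2 ^ n) => 0 < d x).card : ℝ) < (ε₀ / 2 + β) * 2 ^ n) ∧
    ((ε₀ / 2 - β) * 2 ^ n < ((Finset.univ.filter fun x : ZMod (2 ^ n) => d x < 0).card : ℝ) ∧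
      ((Finset.univ.filter fun x : ZMod (2 ^ n) => d x < 0).card : ℝ) < (ε₀ / 2 + β) * 2 ^ n) := by
  classical
  set P := Finset.univ.filter fun x : ZMod (2 ^ n) => 0 < d x with hP
  set Q := Finset.univ.filter fun x : ZMod (2 ^ n) => d x < 0 with hQ
  set B := Finset.univ.filter fun x : ZMod (2 ^ n) => d x + d (-x) ≠ 0 with hB
  have hsum : P.card + Q.card = (Finset.univ.filter fun x : ZMod (2 ^ n) => d x ≠ 0).card := by
    rw [hP, hQ, ← Finset.card_union_of_disjoint, ← Finset.filter_or]
    · apply congrArg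
      apply Finset.filter_congr
      intro x _
      constructor
      · intro h; omega
      · intro h; omega
    · rw [Finset.disjoint_left]
      intro x hx hx'
      simp only [Finset.mem_filter] at hx hx'
      omega
  have hPQ : (P \ B).card ≤ Q.card := by
    apply Finset.card_le_card_of_injOn (fun x => -x)
    · intro x hx
      simp only [hP, hQ, hB, Finset.mem_sdiff, Finset.mem_filter, Finset.mem_univ, true_and,
        not_not, Finset.mem_coe] at hx ⊢
      omega
    · intro a _ b _ h; exact neg_injective h
  have hQP : (Q \ B).card ≤ P.card := by
    apply Finset.card_le_card_of_injOn (fun x => -x)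
    · intro x hx
      simp only [hP, hQ, hB, Finset.mem_sdiff, Finset.mem_filter, Finset.mem_univ, true_and,
        not_not, Finset.mem_coe] at hx ⊢
      omega
    · intro a _ b _ h; exact neg_injective h
  have h1 : P.card ≤ (P \ B).card + B.card := by
    refine le_trans (Finset.card_le_card ?_) (Finset.card_union_le _ _)
    intro x hx
    by_cases hxB : x ∈ B
    · exact Finset.mem_union_right _ hxB
    · exact Finset.mem_union_left _ (Finset.mem_sdiff.mpr ⟨hx, hxB⟩)
  have h2 : Q.card ≤ (Q \ B).card + B.card := by
    refine le_trans (Finset.card_le_card ?_) (Finset.card_union_le _ _)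
    intro x hx
    by_cases hxB : x ∈ B
    · exact Finset.mem_union_right _ hxB
    · exact Finset.mem_union_left _ (Finset.mem_sdiff.mpr ⟨hx, hxB⟩)
  have hp : P.card ≤ Q.card + B.card := by omega
  have hq : Q.card ≤ P.card + B.card := by omega
  have hpR : (P.card : ℝ) ≤ (Q.card : ℝ) + (B.card : ℝ) := by exact_mod_cast hp
  have hqR : (Q.card : ℝ) ≤ (P.card : ℝ) + (B.card : ℝ) := by exact_mod_cast hq
  have hsumR : (P.card : ℝ) + (Q.card : ℝ) = ε₀ * 2 ^ n := by
    rw [← herr]; exact_mod_cast congrArg (Nat.cast : ℕ → ℝ) hsum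
  constructor <;> constructor <;> linarith
end

section
/- Let 0 < α < 1 and ε₀ ≥ 0 be real numbers, and let d : ZMod N → ℤ be a discrepancy function with |{x : d x ≠ 0}| ≤ ε₀·N. Call x ∈ ZMod N bad if its number of opposite-sign matches |{y : d y > 0 ∧ d (x − y) < 0}| exceeds (1/α)·(ε₀/2)²·N. Then |{x : x is bad}| ≤ α·N; that is, a uniformly random x is bad with probability at most α. -/
theorem stmt_4 (n : ℕ) (α ε₀ : ℝ) (hα : 0 < α) (hα1 : α < 1) (hε₀ : 0 ≤ ε₀)
    (d : ZMod (2 ^ n) → ℤ)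
    (herr : ((Finset.univ.filter fun x : ZMod (2 ^ n) => d x ≠ 0).card : ℝ) ≤ ε₀ * 2 ^ n) :
    ((Finset.univ.filter fun x : ZMod (2 ^ n) =>
        (1 / α) * (ε₀ / 2) ^ 2 * 2 ^ n <
          ((Finset.univ.filter fun y : ZMod (2 ^ n) => 0 < d y ∧ d (x - y) < 0).card : ℝ)).card : ℝ) ≤
      α * 2 ^ n := by
  classical
  have hN : (0:ℝ) < (2:ℝ)^n := by positivity
  set P := Finset.univ.filter fun y : ZMod (2^n) => 0 < d y with hP
  set Q := Finset.univ.filter fun y : ZMod (2^n) => d y < 0 with hQ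
  have key : ∀ y : ZMod (2^n),
      (Finset.univ.filter fun x : ZMod (2^n) => d (x - y) < 0).card = Q.card := by
    intro y
    exact Finset.card_equiv (Equiv.subRight y) (fun x => by simp [hQ])
  have hsum : ∑ x : ZMod (2^n),
      (Finset.univ.filter fun y : ZMod (2^n) => 0 < d y ∧ d (x - y) < 0).card
      = P.card * Q.card := by
    simp_rw [Finset.card_filter]
    rw [Finset.sum_comm]
    have h1 : ∀ y : ZMod (2^n),
        (∑ x : ZMod (2^n), if 0 < d y ∧ d (x - y) < 0 then 1 else 0)
        = if 0 < d y then Q.card else 0 := by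
      intro y
      by_cases h : 0 < d y
      · simp only [h, true_and, if_true]
        rw [← Finset.card_filter, key y]
      · simp [h]
    rw [Finset.sum_congr rfl (fun y _ => h1 y), ← Finset.sum_filter, ← hP,
      Finset.sum_const, smul_eq_mul]
  have hPQ : P.card + Q.card ≤ (Finset.univ.filter fun x : ZMod (2^n) => d x ≠ 0).card := by
    rw [← Finset.card_union_of_disjoint]
    · apply Finset.card_le_card
      intro x hx
      simp only [hP, hQ, Finset.mem_union, Finset.mem_filter, Finset.mem_univ, true_and] at hx ⊢
      rcases hx with h | h <;> omega
    · rw [Finset.disjoint_left]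
      intro x hx1 hx2
      simp only [hP, hQ, Finset.mem_filter, Finset.mem_univ, true_and] at hx1 hx2
      omega
  rcases hε₀.eq_or_lt with h0 | h0
  · -- ε₀ = 0 : d vanishes everywhere, bad set empty
    have herr0 : (Finset.univ.filter fun x : ZMod (2^n) => d x ≠ 0) = ∅ := by
      rw [← Finset.card_eq_zero]
      have : ((Finset.univ.filter fun x : ZMod (2^n) => d x ≠ 0).card : ℝ) ≤ 0 := by
        rw [← h0] at herr; linarith
      exact_mod_cast le_antisymm (by exact_mod_cast this) (Nat.zero_le _)
    have hd0 : ∀ x : ZMod (2^n), d x = 0 := by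
      intro x
      by_contra hx
      have : x ∈ (Finset.univ.filter fun x : ZMod (2^n) => d x ≠ 0) := by
        simp [hx]
      rw [herr0] at this; simp at this
    have : (Finset.univ.filter fun x : ZMod (2^n) =>
        (1 / α) * (ε₀ / 2) ^ 2 * 2 ^ n <
          ((Finset.univ.filter fun y : ZMod (2^n) => 0 < d y ∧ d (x - y) < 0).card : ℝ)) = ∅ := by
      apply Finset.filter_false_of_mem
      intro x _
      have : (Finset.univ.filter fun y : ZMod (2^n) => 0 < d y ∧ d (x - y) < 0) = ∅ := by
        apply Finset.filter_false_of_mem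
        intro y _ hy
        rw [hd0 y] at hy
        exact absurd hy.1 (lt_irrefl 0)
      rw [this]
      simp [← h0]
    rw [this]
    simp
    positivity
  · -- ε₀ > 0
    set B := Finset.univ.filter fun x : ZMod (2^n) =>
        (1 / α) * (ε₀ / 2) ^ 2 * 2 ^ n <
          ((Finset.univ.filter fun y : ZMod (2^n) => 0 < d y ∧ d (x - y) < 0).card : ℝ) with hB
    set t : ℝ := (1 / α) * (ε₀ / 2) ^ 2 * 2 ^ n with ht
    have hmar : (B.card : ℝ) * t ≤ (P.card : ℝ) * Q.card := by
      calc (B.card : ℝ) * t = ∑ _x ∈ B, t := by rw [Finset.sum_const, nsmul_eq_mul]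
        _ ≤ ∑ x ∈ B, ((Finset.univ.filter fun y : ZMod (2^n) =>
              0 < d y ∧ d (x - y) < 0).card : ℝ) := by
            apply Finset.sum_le_sum
            intro x hx
            rw [hB, Finset.mem_filter] at hx
            exact le_of_lt hx.2
        _ ≤ ∑ x : ZMod (2^n), ((Finset.univ.filter fun y : ZMod (2^n) =>
              0 < d y ∧ d (x - y) < 0).card : ℝ) := by
            apply Finset.sum_le_sum_of_subset_of_nonneg (Finset.subset_univ B)
            intro x _ _; positivity
        _ = ((P.card : ℝ)) * Q.card := by
            rw [← Nat.cast_sum]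
            exact_mod_cast congrArg (Nat.cast (R := ℝ)) hsum
    have hab : ((P.card : ℝ)) * Q.card ≤ (ε₀ / 2)^2 * (2^n)^2 := by
      have h1 : ((P.card : ℝ)) + Q.card ≤ ε₀ * 2^n := by
        calc ((P.card : ℝ)) + Q.card
            ≤ ((Finset.univ.filter fun x : ZMod (2^n) => d x ≠ 0).card : ℝ) := by
              exact_mod_cast hPQ
          _ ≤ ε₀ * 2^n := herr
      have hp : (0:ℝ) ≤ P.card := Nat.cast_nonneg _
      have hq : (0:ℝ) ≤ Q.card := Nat.cast_nonneg _
      nlinarith [sq_nonneg ((P.card : ℝ) - Q.card)]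
    have ht' : (0:ℝ) < t := by rw [ht]; positivity
    have hfin : (B.card : ℝ) * t ≤ (α * 2^n) * t := by
      have : (α * 2^n) * t = (ε₀ / 2)^2 * (2^n)^2 := by
        rw [ht]; field_simp
      rw [this]
      exact le_trans hmar hab
    exact le_of_mul_le_mul_right hfin ht'
end

section
/- Let α > 0, β ≥ 0, ε₀ be real numbers, let d : ZMod N → ℤ be a discrepancy function, and fix x ∈ ZMod N. Suppose |{y : d y > 0 ∧ d (x − y) < 0}| ≤ (1/α)·(ε₀/2)²·N (x is good), |{y : d y > 0}| ≥ (ε₀/2 − β)·N, and |{y : d y < 0}| ≥ (ε₀/2 − β)·N. Then |{y : d y + d (x − y) ≠ d x}| ≥ (ε₀/2 − β − (1/α)·(ε₀/2)²)·N; that is, the RandSplit test at x fails for at least this many choices of the random splitting point y. -/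
theorem stmt_6 (n : ℕ) (α β ε₀ : ℝ) (hα : 0 < α) (hβ : 0 ≤ β)
    (d : ZMod (2 ^ n) → ℤ) (x : ZMod (2 ^ n))
    (hgood : ((Finset.univ.filter fun y : ZMod (2 ^ n) => 0 < d y ∧ d (x - y) < 0).card : ℝ) ≤
      (1 / α) * (ε₀ / 2) ^ 2 * 2 ^ n)
    (hpos : ((Finset.univ.filter fun y : ZMod (2 ^ n) => 0 < d y).card : ℝ) ≥ (ε₀ / 2 - β) * 2 ^ n)
    (hneg : ((Finset.univ.filter fun y : ZMod (2 ^ n) => d y < 0).card : ℝ) ≥ (ε₀ / 2 - β) * 2 ^ n) :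
    ((Finset.univ.filter fun y : ZMod (2 ^ n) => d y + d (x - y) ≠ d x).card : ℝ) ≥
      (ε₀ / 2 - β - (1 / α) * (ε₀ / 2) ^ 2) * 2 ^ n := by
  set G := (Finset.univ.filter fun y : ZMod (2 ^ n) => 0 < d y ∧ d (x - y) < 0) with hG
  set S := (Finset.univ.filter fun y : ZMod (2 ^ n) => d y + d (x - y) ≠ d x) with hS
  rcases le_or_gt (d x) 0 with hx | hx
  · -- d x ≤ 0 : use positives
    set A := (Finset.univ.filter fun y : ZMod (2 ^ n) => 0 < d y) with hA
    have hsub : A \ G ⊆ S := by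
      intro y hy
      simp only [hA, hG, hS, Finset.mem_sdiff, Finset.mem_filter, Finset.mem_univ,
        true_and] at hy ⊢
      obtain ⟨h1, h2⟩ := hy
      have h3 : 0 ≤ d (x - y) := by
        by_contra h
        exact h2 ⟨h1, lt_of_not_ge h⟩
      omega
    have hc : (A.card : ℝ) ≤ (S.card : ℝ) + (G.card : ℝ) := by
      have : A.card ≤ (A \ G).card + G.card := Finset.card_le_card_sdiff_add_card
      have h2 : (A \ G).card ≤ S.card := Finset.card_le_card hsub
      exact_mod_cast le_trans this (by omega)
    nlinarith [hpos, hgood]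
  · -- d x > 0 : use negatives
    set B := (Finset.univ.filter fun y : ZMod (2 ^ n) => d y < 0) with hB
    set G' := (Finset.univ.filter fun y : ZMod (2 ^ n) => d y < 0 ∧ 0 < d (x - y)) with hG'
    have hcardG : G'.card = G.card := by
      apply Finset.card_bij (fun y _ => x - y)
      · intro y hy
        simp only [hG', Finset.mem_filter, Finset.mem_univ, true_and] at hy
        simp only [hG, Finset.mem_filter, Finset.mem_univ, true_and]
        rw [sub_sub_cancel]
        exact ⟨hy.2, hy.1⟩
      · intro a ha b hb hab
        have : x - (x - a) = x - (x - b) := by rw [hab]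
        simpa [sub_sub_cancel] using this
      · intro z hz
        refine ⟨x - z, ?_, by rw [sub_sub_cancel]⟩
        simp only [hG, Finset.mem_filter, Finset.mem_univ, true_and] at hz
        simp only [hG', Finset.mem_filter, Finset.mem_univ, true_and, sub_sub_cancel]
        exact ⟨hz.2, hz.1⟩
    have hsub : B \ G' ⊆ S := by
      intro y hy
      simp only [hB, hG', hS, Finset.mem_sdiff, Finset.mem_filter, Finset.mem_univ,
        true_and] at hy ⊢
      obtain ⟨h1, h2⟩ := hy
      have h3 : d (x - y) ≤ 0 := by
        by_contra h
        exact h2 ⟨h1, lt_of_not_ge h⟩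
      omega
    have hc : (B.card : ℝ) ≤ (S.card : ℝ) + (G.card : ℝ) := by
      have h1 : B.card ≤ (B \ G').card + G'.card := Finset.card_le_card_sdiff_add_card
      have h2 : (B \ G').card ≤ S.card := Finset.card_le_card hsub
      rw [hcardG] at h1
      exact_mod_cast le_trans h1 (by omega)
    nlinarith [hneg, hgood]
end

section
/- Let d : ZMod N → ℤ be a discrepancy function, set ε₀ := |{x : d x ≠ 0}| / N, and let 0 < α < 1 and β > 0 be real numbers. Then at least one of the following holds: (i) |{x : d x + d (−x) ≠ 0}| ≥ 2β·N, or (ii) |{(x, y) ∈ ZMod N × ZMod N : d y + d (x − y) ≠ d x}| ≥ (1 − α)·(ε₀/2 − β − (1/α)·(ε₀/2)²)·N². -/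
private lemma ineq_real (e q α β : ℝ) (he0 : 0 ≤ e) (he : e ≤ 1/2) (hq1 : e ≤ q)
    (hq2 : q ≤ e + β) (hq3 : q ≤ 2*e) (hα : 0 < α) (hα1 : α < 1) (hβ : 0 < β) :
    (1-α)*(e - β - (1/α)*e^2) ≤ q*(1-q) := by
  have hD : 0 ≤ α*(q*(1-q)) - (1-α)*(α*(e-β)-e^2) := by
    rcases he0.eq_or_lt with h|h
    · have hq0 : q = 0 := le_antisymm (by linarith) (by linarith)
      rw [← h, hq0]; nlinarith [mul_pos hα hβ]
    · have key : e*(α*(q*(1-q)) - (1-α)*(α*(e-β)-e^2)) =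
        (2*e-q)*e*((α-e)^2+e*(1-e)) + (q-e)*e*(e*(1-α)+2*α*(1-2*e))
        + e*α*(q-e)*(2*e-q) + e*α*(1-α)*(β-q+e) := by ring
      have t1 : 0 ≤ (2*e-q)*e*((α-e)^2+e*(1-e)) :=
        mul_nonneg (mul_nonneg (by linarith) he0) (by nlinarith [sq_nonneg (α-e)])
      have t2 : 0 ≤ (q-e)*e*(e*(1-α)+2*α*(1-2*e)) :=
        mul_nonneg (mul_nonneg (by linarith) he0) (by nlinarith)
      have t3 : 0 ≤ e*α*(q-e)*(2*e-q) :=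
        mul_nonneg (mul_nonneg (mul_nonneg he0 hα.le) (by linarith)) (by linarith)
      have t4 : 0 ≤ e*α*(1-α)*(β-q+e) :=
        mul_nonneg (mul_nonneg (mul_nonneg he0 hα.le) (by linarith)) (by linarith)
      nlinarith [key, t1, t2, t3, t4, h]
  have h2 : (1-α)*(e - β - (1/α)*e^2) = ((1-α)*(α*(e-β)-e^2))/α := by
    rw [eq_div_iff hα.ne']
    have h : (1/α)*α = 1 := one_div_mul_cancel hα.ne'
    linear_combination -((1-α)*e^2)*h
  rw [h2, div_le_iff₀ hα]
  nlinarith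

private lemma ineq_real' (Bc cc Tc α β Nr : ℝ) (hN : 0 < Nr) (hB0 : 0 ≤ Bc) (hBN : Bc ≤ Nr)
    (h1 : Bc ≤ 2*cc) (h2 : cc ≤ Bc) (h3 : 2*cc ≤ Bc + Tc) (hT : Tc < 2*β*Nr)
    (hα : 0 < α) (hα1 : α < 1) (hβ : 0 < β) :
    (1-α)*(Bc/Nr/2 - β - (1/α)*(Bc/Nr/2)^2) * Nr^2 ≤ cc*(Nr - cc) := by
  have hcc0 : 0 ≤ cc := by linarith
  have h := ineq_real (Bc/(2*Nr)) (cc/Nr) α β (by positivity) ?_ ?_ ?_ ?_ hα hα1 hβ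
  · have e1 : Bc/Nr/2 = Bc/(2*Nr) := by rw [div_div, mul_comm]
    have e2 : (cc/Nr)*(1-cc/Nr)*Nr^2 = cc*(Nr-cc) := by
      have hinv : Nr⁻¹ * Nr = 1 := inv_mul_cancel₀ hN.ne'
      linear_combination (cc*Nr - 2*cc^2 - cc^2*(Nr⁻¹*Nr - 1)) * hinv
    calc (1-α)*(Bc/Nr/2 - β - (1/α)*(Bc/Nr/2)^2) * Nr^2
        ≤ (cc/Nr)*(1-cc/Nr)*Nr^2 := by
          rw [e1]; exact mul_le_mul_of_nonneg_right h (by positivity)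
      _ = cc*(Nr-cc) := e2
  · rw [div_le_div_iff₀ (by positivity) (by norm_num)]
    linarith
  · rw [div_le_div_iff₀ (by positivity) hN]
    nlinarith
  · have hs : Bc/(2*Nr) + β = (Bc + 2*β*Nr)/(2*Nr) := by field_simp
    rw [hs, div_le_div_iff₀ hN (by positivity)]
    nlinarith
  · have hs : 2*(Bc/(2*Nr)) = Bc/Nr := by field_simp
    rw [hs]
    gcongr

private lemma key_count (N : ℕ) [NeZero N] (d : ZMod N → ℤ) :
    (Finset.univ.filter fun x : ZMod N => d x < 0).card * N
      + (Finset.univ.filter fun x : ZMod N => d x < 0).card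
        * (Finset.univ.filter fun x : ZMod N => d x < 0).card
    ≤ (Finset.univ.filter fun p : ZMod N × ZMod N => d p.2 + d (p.1 - p.2) ≠ d p.1).card
      + 2 * ((Finset.univ.filter fun x : ZMod N => d x < 0).card
           * (Finset.univ.filter fun x : ZMod N => d x < 0).card) := by
  classical
  set Neg : Finset (ZMod N) := Finset.univ.filter fun x => d x < 0 with hNegdef
  set F : Finset (ZMod N × ZMod N) :=
    Finset.univ.filter fun p => d p.2 + d (p.1 - p.2) ≠ d p.1 with hFdef
  set W : Finset (ZMod N × ZMod N) := Finset.univ.filter fun p => d p.1 < 0 with hWdef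
  set U1 : Finset (ZMod N × ZMod N) :=
    Finset.univ.filter fun p => d p.1 < 0 ∧ d p.2 < 0 with hU1def
  set U2 : Finset (ZMod N × ZMod N) :=
    Finset.univ.filter fun p => d p.1 < 0 ∧ d (p.1 - p.2) < 0 with hU2def
  set R : Finset (ZMod N × ZMod N) :=
    Finset.univ.filter fun p => d p.2 < 0 ∧ d (p.1 - p.2) < 0 with hRdef
  have hW : W.card = Neg.card * N := by
    have h : W = Neg ×ˢ Finset.univ := by
      ext p; simp [hWdef, hNegdef, Finset.mem_product]
    rw [h, Finset.card_product, Finset.card_univ, ZMod.card]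
  have hU1 : U1.card = Neg.card * Neg.card := by
    have h : U1 = Neg ×ˢ Neg := by
      ext p; simp [hU1def, hNegdef, Finset.mem_product]
    rw [h, Finset.card_product]
  have hU2 : U2.card = Neg.card * Neg.card := by
    rw [← hU1]
    apply Finset.card_nbij' (fun p => (p.1, p.1 - p.2)) (fun p => (p.1, p.1 - p.2))
    · intro p hp; simp only [hU2def, hU1def, Finset.mem_coe, Finset.mem_filter, Finset.mem_univ,
        true_and] at hp ⊢; exact hp
    · intro p hp; simp only [hU2def, hU1def, Finset.mem_coe, Finset.mem_filter, Finset.mem_univ,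
        true_and] at hp ⊢; exact ⟨hp.1, by rw [sub_sub_cancel]; exact hp.2⟩
    · intro p _; simp [Prod.ext_iff, sub_sub_cancel]
    · intro p _; simp [Prod.ext_iff, sub_sub_cancel]
  have hR : R.card = Neg.card * Neg.card := by
    have h : R.card = (Neg ×ˢ Neg).card := by
      apply Finset.card_nbij' (fun p => (p.2, p.1 - p.2)) (fun q => (q.1 + q.2, q.1))
      · intro p hp; simp only [hRdef, Finset.mem_coe, Finset.mem_filter, Finset.mem_univ, true_and] at hp
        simp [Finset.mem_product, hNegdef, hp.1, hp.2]
      · intro q hq; simp only [Finset.mem_coe, Finset.mem_product, hNegdef, Finset.mem_filter,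
          Finset.mem_univ, true_and] at hq
        simp only [hRdef, Finset.mem_coe, Finset.mem_filter, Finset.mem_univ, true_and]
        exact ⟨hq.1, by rw [add_sub_cancel_left]; exact hq.2⟩
      · intro p _; simp [Prod.ext_iff, add_sub_cancel]
      · intro q _; simp [Prod.ext_iff, add_sub_cancel_left]
    rw [h, Finset.card_product]
  have hUW : U1 ∪ U2 ⊆ W := by
    intro p hp
    simp only [hU1def, hU2def, hWdef, Finset.mem_union, Finset.mem_filter,
      Finset.mem_univ, true_and] at hp ⊢
    tauto
  have hU12 : (U1 ∪ U2).card + (U1 ∩ U2).card = U1.card + U2.card :=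
    Finset.card_union_add_card_inter _ _
  have hWsplit : (W \ (U1 ∪ U2)).card + (U1 ∪ U2).card = W.card :=
    Finset.card_sdiff_add_card_eq_card hUW
  have hRsplit : (R ∩ W).card + (R \ W).card = R.card :=
    Finset.card_inter_add_card_sdiff R W
  have hRWU : R ∩ W = U1 ∩ U2 := by
    ext p
    simp only [hRdef, hWdef, hU1def, hU2def, Finset.mem_inter, Finset.mem_filter,
      Finset.mem_univ, true_and]
    tauto
  have hdisj : Disjoint (W \ (U1 ∪ U2)) (R \ W) :=
    (Finset.sdiff_disjoint.mono_right (Finset.sdiff_subset)).symm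
  have hsub : (W \ (U1 ∪ U2)) ∪ (R \ W) ⊆ F := by
    intro p hp
    simp only [hU1def, hU2def, hWdef, hRdef, hFdef, Finset.mem_union, Finset.mem_sdiff,
      Finset.mem_filter, Finset.mem_univ, true_and, not_or, not_and, not_lt] at hp ⊢
    rcases hp with ⟨h1, h2, h3⟩ | ⟨⟨h1, h2⟩, h3⟩
    · have := h2 h1; have := h3 h1; omega
    · omega
  have hcard : (W \ (U1 ∪ U2)).card + (R \ W).card ≤ F.card := by
    rw [← Finset.card_union_of_disjoint hdisj]
    exact Finset.card_le_card hsub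
  have hRWcard : (R ∩ W).card = (U1 ∩ U2).card := by rw [hRWU]
  zify at *
  linarith

theorem stmt_7 (n : ℕ) (d : ZMod (2 ^ n) → ℤ) (ε₀ α β : ℝ)
    (hε₀ : ε₀ = ((Finset.univ.filter fun x : ZMod (2 ^ n) => d x ≠ 0).card : ℝ) / 2 ^ n)
    (hα : 0 < α) (hα1 : α < 1) (hβ : 0 < β) :
    ((Finset.univ.filter fun x : ZMod (2 ^ n) => d x + d (-x) ≠ 0).card : ℝ) ≥ 2 * β * 2 ^ n ∨
    ((Finset.univ.filter fun p : ZMod (2 ^ n) × ZMod (2 ^ n) =>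
        d p.2 + d (p.1 - p.2) ≠ d p.1).card : ℝ) ≥
      (1 - α) * (ε₀ / 2 - β - (1 / α) * (ε₀ / 2) ^ 2) * (2 ^ n) ^ 2 := by
  haveI : NeZero (2^n : ℕ) := ⟨pow_ne_zero n two_ne_zero⟩
  by_cases hT : ((Finset.univ.filter fun x : ZMod (2 ^ n) => d x + d (-x) ≠ 0).card : ℝ)
      ≥ 2 * β * 2 ^ n
  · exact Or.inl hT
  right
  push_neg at hT
  classical
  set B : Finset (ZMod (2^n)) := Finset.univ.filter fun x => d x ≠ 0 with hBdef
  set T : Finset (ZMod (2^n)) := Finset.univ.filter fun x => d x + d (-x) ≠ 0 with hTdef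
  set F : Finset (ZMod (2^n) × ZMod (2^n)) :=
    Finset.univ.filter fun p => d p.2 + d (p.1 - p.2) ≠ d p.1 with hFdef
  set P : Finset (ZMod (2^n)) := Finset.univ.filter fun x => 0 < d x with hPdef
  set Ng : Finset (ZMod (2^n)) := Finset.univ.filter fun x => d x < 0 with hNgdef
  -- P + Ng = B
  have hPN : P.card + Ng.card = B.card := by
    rw [← Finset.card_union_of_disjoint]
    · congr 1
      ext x
      simp only [hPdef, hNgdef, hBdef, Finset.mem_union, Finset.mem_filter,
        Finset.mem_univ, true_and]
      omega
    · rw [Finset.disjoint_left]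
      intro x h1 h2
      simp only [hPdef, hNgdef, Finset.mem_filter, Finset.mem_univ, true_and] at h1 h2
      omega
  -- P ≤ Ng + T and Ng ≤ P + T
  have hPT : P.card ≤ Ng.card + T.card := by
    calc P.card ≤ (P \ T).card + T.card := Finset.card_le_card_sdiff_add_card
      _ ≤ _ := by
        gcongr ?_ + _
        apply Finset.card_le_card_of_injOn (fun x => -x)
        · intro x hx
          simp only [hPdef, hTdef, hNgdef, Finset.mem_coe, Finset.mem_sdiff, Finset.mem_filter,
            Finset.mem_univ, true_and, not_not] at hx ⊢
          omega
        · intro a _ b _ h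
          exact neg_inj.mp h
  have hNT : Ng.card ≤ P.card + T.card := by
    calc Ng.card ≤ (Ng \ T).card + T.card := Finset.card_le_card_sdiff_add_card
      _ ≤ _ := by
        gcongr ?_ + _
        apply Finset.card_le_card_of_injOn (fun x => -x)
        · intro x hx
          simp only [hPdef, hTdef, hNgdef, Finset.mem_coe, Finset.mem_sdiff, Finset.mem_filter,
            Finset.mem_univ, true_and, not_not] at hx ⊢
          omega
        · intro a _ b _ h
          exact neg_inj.mp h
  -- key counts for d and -d
  have hkey1 := key_count (2^n) d
  have hkey2 := key_count (2^n) (fun x => -d x)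
  have hNg' : (Finset.univ.filter fun x : ZMod (2^n) => -d x < 0) = P := by
    ext x
    simp only [hPdef, Finset.mem_filter, Finset.mem_univ, true_and, neg_lt_zero]
  have hF' : (Finset.univ.filter fun p : ZMod (2^n) × ZMod (2^n) =>
      (fun x => -d x) p.2 + (fun x => -d x) (p.1 - p.2) ≠ (fun x => -d x) p.1) = F := by
    ext p
    simp only [hFdef, Finset.mem_filter, Finset.mem_univ, true_and]
    omega
  rw [hNg'] at hkey2
  rw [hF'] at hkey2
  -- B ≤ 2^n
  have hBN : B.card ≤ 2^n := by
    calc B.card ≤ Finset.univ.card := Finset.card_le_univ B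
      _ = 2^n := by rw [Finset.card_univ, ZMod.card]
  -- go to reals
  have hNr : (0:ℝ) < 2^n := by positivity
  rcases le_total P.card Ng.card with hc | hc
  · -- use Ng
    have hmain := ineq_real' (B.card : ℝ) (Ng.card : ℝ) (T.card : ℝ) α β (2^n)
      hNr (by positivity) (by exact_mod_cast hBN)
      (by exact_mod_cast (by omega : B.card ≤ 2 * Ng.card))
      (by exact_mod_cast (by omega : Ng.card ≤ B.card))
      (by exact_mod_cast (by omega : 2 * Ng.card ≤ B.card + T.card))
      hT hα hα1 hβ
    have hF1 : ((Ng.card : ℝ) * (2:ℝ)^n - (Ng.card:ℝ)*(Ng.card:ℝ)) ≤ (F.card : ℝ) := by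
      have := hkey1
      zify at this
      push_cast
      have h2 : ((Ng.card * 2^n + Ng.card * Ng.card : ℕ) : ℝ)
          ≤ ((F.card + 2 * (Ng.card * Ng.card) : ℕ) : ℝ) := by exact_mod_cast this
      push_cast at h2
      linarith
    rw [hε₀]
    have heq : ((B.card : ℝ) / 2^n) / 2 = (B.card : ℝ) / (2:ℝ)^n / 2 := rfl
    calc (1 - α) * ((B.card:ℝ)/2^n / 2 - β - (1/α) * ((B.card:ℝ)/2^n / 2)^2) * ((2:ℝ)^n)^2
        ≤ (Ng.card:ℝ) * ((2:ℝ)^n - (Ng.card:ℝ)) := hmain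
      _ ≤ (F.card : ℝ) := by nlinarith [hF1]
  · -- use P
    have hmain := ineq_real' (B.card : ℝ) (P.card : ℝ) (T.card : ℝ) α β (2^n)
      hNr (by positivity) (by exact_mod_cast hBN)
      (by exact_mod_cast (by omega : B.card ≤ 2 * P.card))
      (by exact_mod_cast (by omega : P.card ≤ B.card))
      (by exact_mod_cast (by omega : 2 * P.card ≤ B.card + T.card))
      hT hα hα1 hβ
    have hF1 : ((P.card : ℝ) * (2:ℝ)^n - (P.card:ℝ)*(P.card:ℝ)) ≤ (F.card : ℝ) := by
      have := hkey2
      have h2 : ((P.card * 2^n + P.card * P.card : ℕ) : ℝ)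
          ≤ ((F.card + 2 * (P.card * P.card) : ℕ) : ℝ) := by exact_mod_cast this
      push_cast at h2
      linarith
    rw [hε₀]
    calc (1 - α) * ((B.card:ℝ)/2^n / 2 - β - (1/α) * ((B.card:ℝ)/2^n / 2)^2) * ((2:ℝ)^n)^2
        ≤ (P.card:ℝ) * ((2:ℝ)^n - (P.card:ℝ)) := hmain
      _ ≤ (F.card : ℝ) := by nlinarith [hF1]
end

section
/- Let d : ZMod N → ℤ be a discrepancy function with |{x : d x ≠ 0}| ≤ N/8 (P is 1/8-close to the correct function), and let a ∈ ZMod N satisfy d a ≠ 0 (P is wrong at the checked input a). Then |{x : d x + d (a − x) ≠ d a}| ≥ (3/4)·N; that is, the RandSplit test at a fails for at least 3/4 of the uniformly random splitting points x. -/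
theorem stmt_10 (n : ℕ) (d : ZMod (2 ^ n) → ℤ)
    (hclose : ((Finset.univ.filter fun x : ZMod (2 ^ n) => d x ≠ 0).card : ℝ) ≤ 2 ^ n / 8)
    (a : ZMod (2 ^ n)) (ha : d a ≠ 0) :
    ((Finset.univ.filter fun x : ZMod (2 ^ n) => d x + d (a - x) ≠ d a).card : ℝ) ≥
      (3 / 4) * 2 ^ n := by
  classical
  haveI : NeZero (2 ^ n) := ⟨pow_ne_zero n two_ne_zero⟩
  set A := Finset.univ.filter fun x : ZMod (2 ^ n) => d x ≠ 0 with hA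
  set B := Finset.univ.filter fun x : ZMod (2 ^ n) => d (a - x) ≠ 0 with hB
  have hBA : B.card = A.card := by
    apply Finset.card_bij' (fun x _ => a - x) (fun x _ => a - x)
    · intro x hx
      simp only [hB, Finset.mem_filter, Finset.mem_univ, true_and] at hx
      simp only [hA, Finset.mem_filter, Finset.mem_univ, true_and]
      exact hx
    · intro x hx
      simp only [hA, Finset.mem_filter, Finset.mem_univ, true_and] at hx
      simp only [hB, Finset.mem_filter, Finset.mem_univ, true_and]
      rwa [sub_sub_cancel]
    · intro x _; rw [sub_sub_cancel]
    · intro x _; rw [sub_sub_cancel]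
  have hsub : (Finset.univ.filter fun x : ZMod (2 ^ n) => d x + d (a - x) = d a) ⊆ A ∪ B := by
    intro x hx
    simp only [Finset.mem_filter, Finset.mem_univ, true_and] at hx
    simp only [hA, hB, Finset.mem_union, Finset.mem_filter, Finset.mem_univ, true_and]
    by_contra h
    push_neg at h
    obtain ⟨h1, h2⟩ := h
    rw [h1, h2] at hx
    exact ha hx.symm
  have hcard : (Finset.univ.filter fun x : ZMod (2 ^ n) => d x + d (a - x) = d a).card
      ≤ 2 * A.card := by
    calc _ ≤ (A ∪ B).card := Finset.card_le_card hsub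
    _ ≤ A.card + B.card := Finset.card_union_le A B
    _ = 2 * A.card := by rw [hBA]; ring
  have hsplit : (Finset.univ.filter fun x : ZMod (2 ^ n) => d x + d (a - x) = d a).card
      + (Finset.univ.filter fun x : ZMod (2 ^ n) => d x + d (a - x) ≠ d a).card = 2 ^ n := by
    rw [Finset.card_filter_add_card_filter_not, Finset.card_univ, ZMod.card]
  have h1 : ((Finset.univ.filter fun x : ZMod (2 ^ n) => d x + d (a - x) = d a).card : ℝ)
      ≤ 2 * (A.card : ℝ) := by exact_mod_cast hcard
  have h2 : ((Finset.univ.filter fun x : ZMod (2 ^ n) => d x + d (a - x) = d a).card : ℝ)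
      + ((Finset.univ.filter fun x : ZMod (2 ^ n) => d x + d (a - x) ≠ d a).card : ℝ)
      = 2 ^ n := by exact_mod_cast hsplit
  linarith
end

section
/- Let P : ZMod N → ℤ be any function and a : ℤ (the program's claimed value at 2^n). Suppose P is 1/8-far from every linear function: for every b : ℤ, |{x : P x ≠ b · (x.val : ℤ)}| ≥ N/8, where x.val ∈ {0, …, N−1} is the integer representative of x. Then either (N : ℤ) does not divide a, or, setting b := a / N and d x := P x − b · (x.val : ℤ), the quantities p₁ := |{x : d x + d (−x) ≠ 0}| / N and p₂ := |{(x, y) ∈ ZMod N × ZMod N : d y + d (x − y) ≠ d x}| / N² satisfy (1 − p₁)^96 · (1 − p₂)^709 ≤ 1/4. (Hence the general linearity property tester, which first checks 2^n ∣ P(2^n) and then runs the two tests with k₁ = 96 and k₂ = 709 independent uniform samples, returns FAIL with probability at least 3/4 on any P that is 1/8-far from linear.) -/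
set_option maxHeartbeats 1000000

open Finset

private lemma card_filter_comp_equiv {α β : Type*} [Fintype α] [Fintype β] (e : α ≃ β)
    (P : β → Prop) [DecidablePred P] :
    (Finset.univ.filter fun a => P (e a)).card = (Finset.univ.filter P).card :=
  Finset.card_bij' (fun a _ => e a) (fun b _ => e.symm b)
    (by simp) (by simp) (by simp) (by simp)

private def epairEquiv {G : Type*} [AddCommGroup G] : (G × G) ≃ (G × G) where
  toFun p := (p.2, p.1 - p.2)
  invFun q := (q.1 + q.2, q.1)
  left_inv p := by apply Prod.ext <;> simp
  right_inv q := by apply Prod.ext <;> simp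

private lemma key_lemma (M : ℕ) [NeZero M] (d : ZMod M → ℤ)
    (hK : M ≤ 8 * (Finset.univ.filter fun x : ZMod M => d x ≠ 0).card) :
    M ^ 2 ≤ 24 * (Finset.univ.filter
      (fun p : ZMod M × ZMod M => d p.1 + d p.2 ≠ d (p.1 + p.2))).card := by
  have hM : 0 < M := Nat.pos_of_ne_zero (NeZero.ne M)
  set K := (Finset.univ.filter fun x : ZMod M => d x ≠ 0).card with hKdef
  set T := Finset.univ.filter (fun p : ZMod M × ZMod M => d p.1 + d p.2 ≠ d (p.1 + p.2)) with hTdef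
  set m := T.card with hmdef
  by_cases h6 : M ^ 2 ≤ 6 * m
  · omega
  push_neg at h6
  set v : ZMod M → ZMod M → ℤ := fun x y => d (x + y) - d y with hv
  have hcard : Fintype.card (ZMod M) = M := ZMod.card M
  -- Step A : disagreement pairs bounded by 2m
  have stepA : ∀ x : ZMod M,
      (Finset.univ.filter fun p : ZMod M × ZMod M => v x p.1 ≠ v x p.2).card ≤ 2 * m := by
    intro x
    have h1 : (Finset.univ.filter fun p : ZMod M × ZMod M =>
        d (x + p.1) + d p.2 ≠ d (x + p.1 + p.2)).card = m := by
      rw [hmdef, hTdef]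
      exact card_filter_comp_equiv ((Equiv.addLeft x).prodCongr (Equiv.refl _))
        (fun q : ZMod M × ZMod M => d q.1 + d q.2 ≠ d (q.1 + q.2))
    have h2 : (Finset.univ.filter fun p : ZMod M × ZMod M =>
        d p.1 + d (x + p.2) ≠ d (p.1 + (x + p.2))).card = m := by
      rw [hmdef, hTdef]
      exact card_filter_comp_equiv ((Equiv.refl _).prodCongr (Equiv.addLeft x))
        (fun q : ZMod M × ZMod M => d q.1 + d q.2 ≠ d (q.1 + q.2))
    have hsub : (Finset.univ.filter fun p : ZMod M × ZMod M => v x p.1 ≠ v x p.2) ⊆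
        (Finset.univ.filter fun p : ZMod M × ZMod M =>
          d (x + p.1) + d p.2 ≠ d (x + p.1 + p.2)) ∪
        (Finset.univ.filter fun p : ZMod M × ZMod M =>
          d p.1 + d (x + p.2) ≠ d (p.1 + (x + p.2))) := by
      intro p hp
      simp only [Finset.mem_filter, Finset.mem_univ, true_and, Finset.mem_union] at hp ⊢
      by_contra hc
      push_neg at hc
      obtain ⟨e1, e2⟩ := hc
      apply hp
      have hxy : x + p.1 + p.2 = p.1 + (x + p.2) := by ring
      rw [hxy] at e1
      simp only [hv]
      omega
    calc (Finset.univ.filter fun p : ZMod M × ZMod M => v x p.1 ≠ v x p.2).card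
        ≤ _ := Finset.card_le_card hsub
      _ ≤ _ + _ := Finset.card_union_le _ _
      _ ≤ 2 * m := by rw [h1, h2]; omega
  -- Step B : choose majority value g x with small disagreement
  have stepB : ∀ x : ZMod M, ∃ gx : ℤ,
      M * (Finset.univ.filter fun y : ZMod M => v x y ≠ gx).card ≤ 2 * m := by
    intro x
    obtain ⟨y₀, -, hy₀⟩ := Finset.exists_max_image Finset.univ
      (fun y : ZMod M => (Finset.univ.filter fun z : ZMod M => v x y = v x z).card)
      (Finset.univ_nonempty)
    refine ⟨v x y₀, ?_⟩
    -- fiberwise decomposition of disagreement pairs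
    have hfib : (Finset.univ.filter fun p : ZMod M × ZMod M => v x p.1 ≠ v x p.2).card
        = ∑ y : ZMod M, (Finset.univ.filter fun z : ZMod M => v x y ≠ v x z).card := by
      rw [Finset.card_eq_sum_card_fiberwise (f := Prod.fst) (t := Finset.univ) (by simp)]
      refine Finset.sum_congr rfl fun y _ => ?_
      refine Finset.card_bij' (fun p _ => p.2) (fun z _ => (y, z)) ?_ ?_ ?_ ?_
      · intro p hp
        simp only [Finset.mem_filter, Finset.mem_univ, true_and] at hp ⊢
        rcases hp with ⟨h1, h2⟩
        rw [← h2]; exact h1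
      · intro z hz
        simp only [Finset.mem_filter, Finset.mem_univ, true_and] at hz ⊢
        exact ⟨hz, trivial⟩
      · intro p hp
        simp only [Finset.mem_filter, Finset.mem_univ, true_and] at hp
        exact Prod.ext hp.2.symm rfl
      · intro z hz
        rfl
    have hcompl : ∀ y : ZMod M,
        (Finset.univ.filter fun z : ZMod M => v x y = v x z).card
        + (Finset.univ.filter fun z : ZMod M => v x y ≠ v x z).card = M := by
      intro y
      have := Finset.card_filter_add_card_filter_not
        (s := (Finset.univ : Finset (ZMod M))) (p := fun z => v x y = v x z)
      simp only [ne_eq, Finset.card_univ, hcard] at this ⊢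
      exact this
    -- sum of agreement fibers bounded by M * (agreement of y₀)
    have hsum1 : ∑ y : ZMod M, (Finset.univ.filter fun z : ZMod M => v x y = v x z).card
        ≤ M * (Finset.univ.filter fun z : ZMod M => v x y₀ = v x z).card := by
      calc _ ≤ ∑ _y : ZMod M, (Finset.univ.filter fun z : ZMod M => v x y₀ = v x z).card :=
            Finset.sum_le_sum fun y _ => hy₀ y (Finset.mem_univ y)
        _ = _ := by rw [Finset.sum_const, Finset.card_univ, hcard, smul_eq_mul]
    have hsum2 : ∑ y : ZMod M, ((Finset.univ.filter fun z : ZMod M => v x y = v x z).card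
        + (Finset.univ.filter fun z : ZMod M => v x y ≠ v x z).card) = M * M := by
      rw [Finset.sum_congr rfl fun y _ => hcompl y, Finset.sum_const, Finset.card_univ, hcard,
        smul_eq_mul]
    rw [Finset.sum_add_distrib] at hsum2
    have hA := stepA x
    rw [hfib] at hA
    -- combine : M*M ≤ M * c(g) + 2m, and c(g) + |B| = M
    have hcg := hcompl y₀
    -- note filter z ≠ : orientation
    have horient : (Finset.univ.filter fun y : ZMod M => v x y ≠ v x y₀).card
        = (Finset.univ.filter fun z : ZMod M => v x y₀ ≠ v x z).card := by
      congr 1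
      apply Finset.filter_congr
      intro z _
      exact ne_comm
    rw [horient]
    have e1 : M * (Finset.univ.filter fun z : ZMod M => v x y₀ ≠ v x z).card
        + M * (Finset.univ.filter fun z : ZMod M => v x y₀ = v x z).card = M * M := by
      rw [← Nat.mul_add, Nat.add_comm, hcg]
    linarith [hsum1, hsum2, hA, e1]
  choose g hg using stepB
  -- Step C : additivity of g
  have hadd : ∀ x₁ x₂ : ZMod M, g (x₁ + x₂) = g x₁ + g x₂ := by
    intro x₁ x₂
    have hB' : (Finset.univ.filter fun y : ZMod M => v x₂ (x₁ + y) ≠ g x₂).card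
        = (Finset.univ.filter fun y : ZMod M => v x₂ y ≠ g x₂).card :=
      card_filter_comp_equiv (Equiv.addLeft x₁) (fun y => v x₂ y ≠ g x₂)
    set U := (Finset.univ.filter fun y : ZMod M => v x₁ y ≠ g x₁)
      ∪ (Finset.univ.filter fun y : ZMod M => v x₂ (x₁ + y) ≠ g x₂)
      ∪ (Finset.univ.filter fun y : ZMod M => v (x₁ + x₂) y ≠ g (x₁ + x₂)) with hU
    have hUcard : M * U.card ≤ 6 * m := by
      have h1 := hg x₁
      have h2 := hg x₂
      have h3 := hg (x₁ + x₂)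
      have hle : U.card ≤ (Finset.univ.filter fun y : ZMod M => v x₁ y ≠ g x₁).card
          + (Finset.univ.filter fun y : ZMod M => v x₂ (x₁ + y) ≠ g x₂).card
          + (Finset.univ.filter fun y : ZMod M => v (x₁ + x₂) y ≠ g (x₁ + x₂)).card := by
        rw [hU]
        calc _ ≤ _ := Finset.card_union_le _ _
          _ ≤ _ := by gcongr; exact Finset.card_union_le _ _
      rw [hB'] at hle
      calc M * U.card ≤ M * ((Finset.univ.filter fun y : ZMod M => v x₁ y ≠ g x₁).card
          + (Finset.univ.filter fun y : ZMod M => v x₂ y ≠ g x₂).card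
          + (Finset.univ.filter fun y : ZMod M => v (x₁ + x₂) y ≠ g (x₁ + x₂)).card) :=
            Nat.mul_le_mul (Nat.le_refl M) hle
        _ = M * (Finset.univ.filter fun y : ZMod M => v x₁ y ≠ g x₁).card
          + M * (Finset.univ.filter fun y : ZMod M => v x₂ y ≠ g x₂).card
          + M * (Finset.univ.filter fun y : ZMod M => v (x₁ + x₂) y ≠ g (x₁ + x₂)).card := by
            ring
        _ ≤ 6 * m := by linarith [h1, h2, h3]
    have hex : ∃ y : ZMod M, y ∉ U := by
      by_contra hc
      push_neg at hc
      have : (Finset.univ : Finset (ZMod M)).card ≤ U.card :=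
        Finset.card_le_card fun y _ => hc y
      rw [Finset.card_univ, hcard] at this
      have h9 : M * M ≤ M * U.card := Nat.mul_le_mul (Nat.le_refl M) this
      have h10 : M ^ 2 = M * M := by ring
      linarith [hUcard, h6, h9]
    obtain ⟨y, hy⟩ := hex
    rw [hU] at hy
    simp only [Finset.mem_union, Finset.mem_filter, Finset.mem_univ, true_and, not_or,
      not_not] at hy
    obtain ⟨⟨e1, e2⟩, e3⟩ := hy
    simp only [hv] at e1 e2 e3
    have hxy : x₂ + (x₁ + y) = x₁ + x₂ + y := by ring
    rw [hxy] at e2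
    omega
  have hzero : g 0 = 0 := by
    have := hadd 0 0
    simp only [add_zero] at this
    omega
  -- Step E : g vanishes identically
  have hg0 : ∀ x : ZMod M, g x = 0 := by
    intro x
    have hsmul : ∀ k : ℕ, g ((k : ZMod M) * x) = k * g x := by
      intro k
      induction k with
      | zero => simpa using hzero
      | succ k ih =>
        have h1 : ((k + 1 : ℕ) : ZMod M) * x = (k : ZMod M) * x + x := by push_cast; ring
        rw [h1, hadd, ih]
        push_cast; ring
    have := hsmul M
    rw [ZMod.natCast_self, zero_mul, hzero] at this
    have hM' : (M : ℤ) ≠ 0 := by exact_mod_cast hM.ne'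
    exact (mul_eq_zero.mp this.symm).resolve_left hM'
  -- Step F : closeness counting
  set Bad := (Finset.univ.filter fun x : ZMod M => d x ≠ 0) with hBad
  set S := Bad.biUnion (fun x => {x} ×ˢ (Finset.univ.filter fun y : ZMod M => v x y = g x))
    with hS
  have hScard : S.card = ∑ x ∈ Bad, (Finset.univ.filter fun y : ZMod M => v x y = g x).card := by
    rw [hS]
    rw [Finset.card_biUnion]
    · refine Finset.sum_congr rfl fun x _ => ?_
      rw [Finset.card_product, Finset.card_singleton, one_mul]
    · intro x hx x' hx' hne
      simp only [Finset.disjoint_left]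
      intro p hp hp'
      simp only [Finset.mem_product, Finset.mem_singleton] at hp hp'
      exact hne (hp.1 ▸ hp'.1 ▸ rfl)
  have hST : S ⊆ T := by
    intro p hp
    rw [hS] at hp
    simp only [Finset.mem_biUnion] at hp
    obtain ⟨x, hx, hp⟩ := hp
    simp only [Finset.mem_product, Finset.mem_singleton, Finset.mem_filter, Finset.mem_univ,
      true_and] at hp
    obtain ⟨hp1, hp2⟩ := hp
    rw [hBad] at hx
    simp only [Finset.mem_filter, Finset.mem_univ, true_and] at hx
    rw [hTdef]
    simp only [Finset.mem_filter, Finset.mem_univ, true_and]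
    rw [hg0 x] at hp2
    simp only [hv] at hp2
    rw [hp1]
    omega
  have hSm : ∑ x ∈ Bad, (Finset.univ.filter fun y : ZMod M => v x y = g x).card ≤ m := by
    rw [← hScard]; exact Finset.card_le_card hST
  have hGB : ∀ x : ZMod M,
      (Finset.univ.filter fun y : ZMod M => v x y = g x).card
      + (Finset.univ.filter fun y : ZMod M => v x y ≠ g x).card = M := by
    intro x
    have := Finset.card_filter_add_card_filter_not
      (s := (Finset.univ : Finset (ZMod M))) (p := fun y => v x y = g x)
    simp only [ne_eq, Finset.card_univ, hcard] at this ⊢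
    exact this
  have hKM : K * M ≤ m + ∑ x ∈ Bad, (Finset.univ.filter fun y : ZMod M => v x y ≠ g x).card := by
    have : ∑ x ∈ Bad, ((Finset.univ.filter fun y : ZMod M => v x y = g x).card
        + (Finset.univ.filter fun y : ZMod M => v x y ≠ g x).card) = K * M := by
      rw [Finset.sum_congr rfl fun x _ => hGB x, Finset.sum_const, smul_eq_mul, hKdef, hBad]
    rw [Finset.sum_add_distrib] at this
    omega
  have hBsum : M * (∑ x ∈ Bad, (Finset.univ.filter fun y : ZMod M => v x y ≠ g x).card)
      ≤ K * (2 * m) := by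
    rw [Finset.mul_sum]
    calc _ ≤ ∑ _x ∈ Bad, 2 * m := Finset.sum_le_sum fun x _ => hg x
      _ = K * (2 * m) := by rw [Finset.sum_const, smul_eq_mul, hKdef, hBad]
  have hKleM : K ≤ M := by
    rw [hKdef, hBad]
    calc _ ≤ (Finset.univ : Finset (ZMod M)).card := Finset.card_filter_le _ _
      _ = M := by rw [Finset.card_univ, hcard]
  -- final arithmetic
  set SB := ∑ x ∈ Bad, (Finset.univ.filter fun y : ZMod M => v x y ≠ g x).card with hSB
  have t1 : K * M * M ≤ (m + SB) * M := Nat.mul_le_mul hKM (Nat.le_refl M)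
  have t2 : K * (2 * m) ≤ M * (2 * m) := Nat.mul_le_mul hKleM (Nat.le_refl _)
  have h7 : K * M * M ≤ 3 * m * M := by nlinarith [t1, hBsum, t2]
  have h8 : K * M ≤ 3 * m := by
    refine Nat.le_of_mul_le_mul_right ?_ hM
    calc K * M * M ≤ 3 * m * M := h7
      _ = 3 * m * M := rfl
  calc M ^ 2 = M * M := by ring
    _ ≤ 8 * K * M := Nat.mul_le_mul hK (Nat.le_refl M)
    _ = 8 * (K * M) := by ring
    _ ≤ 8 * (3 * m) := Nat.mul_le_mul (Nat.le_refl 8) h8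
    _ = 24 * m := by ring

theorem stmt_11 (n : ℕ) (P : ZMod (2 ^ n) → ℤ) (a : ℤ)
    (hfar : ∀ b : ℤ,
      ((Finset.univ.filter fun x : ZMod (2 ^ n) => P x ≠ b * (x.val : ℤ)).card : ℝ) ≥ 2 ^ n / 8) :
    ¬ ((2 ^ n : ℤ) ∣ a) ∨
      (let b : ℤ := a / 2 ^ n
       let d : ZMod (2 ^ n) → ℤ := fun x => P x - b * (x.val : ℤ)
       (1 - ((Finset.univ.filter fun x : ZMod (2 ^ n) => d x + d (-x) ≠ 0).card : ℝ) / 2 ^ n) ^ 96 *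
         (1 - ((Finset.univ.filter fun p : ZMod (2 ^ n) × ZMod (2 ^ n) =>
             d p.2 + d (p.1 - p.2) ≠ d p.1).card : ℝ) / (2 ^ n) ^ 2) ^ 709 ≤ 1 / 4) := by
  right
  intro b d
  have hd : ∀ x, d x = P x - b * (x.val : ℤ) := fun _ => rfl
  have hN : 0 < 2 ^ n := Nat.two_pow_pos n
  haveI : NeZero (2 ^ n) := ⟨hN.ne'⟩
  -- far-from-zero count for d
  have hK : 2 ^ n ≤ 8 * (Finset.univ.filter fun x : ZMod (2 ^ n) => d x ≠ 0).card := by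
    have hfb := hfar b
    have heq : (Finset.univ.filter fun x : ZMod (2 ^ n) => d x ≠ 0)
        = (Finset.univ.filter fun x : ZMod (2 ^ n) => P x ≠ b * (x.val : ℤ)) := by
      apply Finset.filter_congr
      intro x _
      rw [hd x]
      simp [sub_ne_zero]
    rw [heq]
    have h8 : ((2:ℝ) ^ n) ≤ 8 *
        ((Finset.univ.filter fun x : ZMod (2 ^ n) => P x ≠ b * (x.val : ℤ)).card : ℝ) := by
      rw [ge_iff_le, div_le_iff₀ (by norm_num : (0:ℝ) < 8)] at hfb
      linarith
    exact_mod_cast h8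
  have hkey := key_lemma (2 ^ n) d hK
  -- identify the pair-filter with the BLR-form filter
  have hm2 : (Finset.univ.filter fun p : ZMod (2 ^ n) × ZMod (2 ^ n) =>
      d p.2 + d (p.1 - p.2) ≠ d p.1).card
      = (Finset.univ.filter fun p : ZMod (2 ^ n) × ZMod (2 ^ n) =>
        d p.1 + d p.2 ≠ d (p.1 + p.2)).card := by
    rw [← card_filter_comp_equiv (epairEquiv (G := ZMod (2 ^ n)))
      (fun q : ZMod (2 ^ n) × ZMod (2 ^ n) => d q.1 + d q.2 ≠ d (q.1 + q.2))]
    congr 1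
    apply Finset.filter_congr
    intro p _
    have hpe : p.2 + (p.1 - p.2) = p.1 := by ring
    show (d p.2 + d (p.1 - p.2) ≠ d p.1) ↔
      (d p.2 + d (p.1 - p.2) ≠ d (p.2 + (p.1 - p.2)))
    rw [hpe]
  set m1 := (Finset.univ.filter fun x : ZMod (2 ^ n) => d x + d (-x) ≠ 0).card with hm1def
  set m2 := (Finset.univ.filter fun p : ZMod (2 ^ n) × ZMod (2 ^ n) =>
      d p.2 + d (p.1 - p.2) ≠ d p.1).card with hm2def
  have hlow : (2 ^ n) ^ 2 ≤ 24 * m2 := by rw [hm2]; exact hkey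
  have hm1le : m1 ≤ 2 ^ n := by
    rw [hm1def]
    calc _ ≤ (Finset.univ : Finset (ZMod (2 ^ n))).card := Finset.card_filter_le _ _
      _ = 2 ^ n := by rw [Finset.card_univ, ZMod.card]
  have hm2le : m2 ≤ 2 ^ n * 2 ^ n := by
    rw [hm2def]
    calc _ ≤ (Finset.univ : Finset (ZMod (2 ^ n) × ZMod (2 ^ n))).card :=
          Finset.card_filter_le _ _
      _ = 2 ^ n * 2 ^ n := by rw [Finset.card_univ, Fintype.card_prod, ZMod.card]
  -- real arithmetic
  have hNR : (0:ℝ) < 2 ^ n := by positivity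
  have h1a : (0:ℝ) ≤ 1 - (m1 : ℝ) / 2 ^ n := by
    rw [sub_nonneg]
    refine div_le_one_of_le₀ ?_ hNR.le
    exact_mod_cast hm1le
  have h1b : 1 - (m1 : ℝ) / 2 ^ n ≤ 1 := by
    have : (0:ℝ) ≤ (m1 : ℝ) / 2 ^ n := by positivity
    linarith
  have h2a : (0:ℝ) ≤ 1 - (m2 : ℝ) / (2 ^ n) ^ 2 := by
    rw [sub_nonneg]
    refine div_le_one_of_le₀ ?_ (by positivity)
    have : (m2 : ℝ) ≤ (2 ^ n : ℕ) * (2 ^ n : ℕ) := by exact_mod_cast hm2le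
    push_cast at this ⊢
    nlinarith [this]
  have h2b : 1 - (m2 : ℝ) / (2 ^ n) ^ 2 ≤ 23 / 24 := by
    have hcast : ((2:ℝ) ^ n) ^ 2 ≤ 24 * (m2 : ℝ) := by exact_mod_cast hlow
    have hfrac : (1:ℝ) / 24 ≤ (m2 : ℝ) / (2 ^ n) ^ 2 := by
      rw [div_le_div_iff₀ (by norm_num) (by positivity)]
      linarith
    linarith
  calc (1 - (m1 : ℝ) / 2 ^ n) ^ 96 * (1 - (m2 : ℝ) / (2 ^ n) ^ 2) ^ 709
      ≤ 1 * ((23:ℝ) / 24) ^ 709 :=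
        mul_le_mul (pow_le_one₀ h1a h1b) (pow_le_pow_left₀ h2a h2b 709)
          (pow_nonneg h2a 709) zero_le_one
    _ = ((23:ℝ) / 24) ^ 709 := one_mul _
    _ ≤ ((23:ℝ) / 24) ^ 33 := pow_le_pow_of_le_one (by norm_num) (by norm_num) (by norm_num)
    _ ≤ 1 / 4 := by norm_num
end

section
/- Let V := Fin m → ZMod N be the space of m-dimensional vectors of n-bit numbers (componentwise addition modulo N = 2^n), so |V| = 2^{m·n}. Let d : V → ℤ be a discrepancy function with |{v : d v ≠ 0}| ≥ |V| / 8, i.e. the program P errs on at least 1/8 of the vectors. Define p₁ := |{v : d v + d (−v) ≠ 0}| / |V| and p₂ := |{(v, w) ∈ V × V : d w + d (v − w) ≠ d v}| / |V|². Then (1 − p₁)^96 · (1 − p₂)^709 ≤ 1/4. (Hence the self-testing algorithm for a linear homomorphism on V, running the first test 96 times and the RandSplitTwo test 709 times on independent uniform random choices, returns FAIL with probability at least 3/4.) -/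
open Finset

section BLR

variable {G : Type*} [AddCommGroup G] [Fintype G] [DecidableEq G]

private lemma blr_key (d : G → ℤ)
    (hB : Fintype.card G ≤ 8 * (univ.filter fun v => d v ≠ 0).card) :
    (Fintype.card G) ^ 2
      ≤ 10 * (univ.filter fun p : G × G => d p.2 + d (p.1 - p.2) ≠ d p.1).card := by
  classical
  set K := Fintype.card G with hKdef
  have hKpos : 0 < K := Fintype.card_pos
  set F : Finset (G × G) := univ.filter fun p : G × G => d p.2 + d (p.1 - p.2) ≠ d p.1 with hF
  set F' : Finset (G × G) := univ.filter fun p : G × G => d p.1 + d p.2 ≠ d (p.1 + p.2) with hF'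
  have hFF' : F.card = F'.card := by
    apply card_equiv ⟨fun p => (p.2, p.1 - p.2), fun q => (q.1 + q.2, q.1),
      fun p => by simp, fun q => by simp⟩
    intro p
    simp only [hF, hF', mem_filter, mem_univ, true_and, Equiv.coe_fn_mk]
    have h : p.2 + (p.1 - p.2) = p.1 := by abel
    rw [h]
  have hcard2 : Fintype.card (G × G) = K ^ 2 := by
    simp [Fintype.card_prod, sq, hKdef]
  by_cases h6 : K ^ 2 ≤ 6 * F'.card
  · omega
  push_neg at h6
  -- the S sets
  set S : G → ℤ → Finset G := fun v c => univ.filter fun w => d (v + w) - d w = c with hS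
  have hA : ∀ v : G, ∃ c : ℤ, K ^ 2 ≤ K * (S v c).card + 2 * F'.card := by
    intro v
    set C : Finset (G × G) :=
      univ.filter fun q : G × G => d (v + q.1) - d q.1 = d (v + q.2) - d q.2 with hC
    have hcomp : K ^ 2 ≤ C.card + 2 * F'.card := by
      have hsplit := card_filter_add_card_filter_not
        (s := (univ : Finset (G × G)))
        (p := fun q : G × G => d (v + q.1) - d q.1 = d (v + q.2) - d q.2)
      rw [card_univ, hcard2, ← hC] at hsplit
      set N : Finset (G × G) :=
        univ.filter fun q : G × G => ¬ (d (v + q.1) - d q.1 = d (v + q.2) - d q.2) with hN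
      set A₂ : Finset (G × G) :=
        univ.filter fun q : G × G => d (v + q.2) + d (q.1 - q.2) ≠ d (v + q.1) with hA₂
      have hsub : N ⊆ F ∪ A₂ := by
        intro q hq
        simp only [hN, mem_filter, mem_univ, true_and] at hq
        by_contra hq'
        simp only [mem_union, hF, hA₂, mem_filter, mem_univ, true_and, not_or, not_not] at hq'
        obtain ⟨h1, h2⟩ := hq'
        exact hq (by omega)
      have hA₂card : A₂.card = F'.card := by
        apply card_equiv ⟨fun q => (v + q.2, q.1 - q.2), fun r => (r.1 + r.2 - v, r.1 - v),
          fun q => by refine Prod.ext ?_ ?_ <;> simp <;> abel,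
          fun r => by refine Prod.ext ?_ ?_ <;> simp <;> abel⟩
        intro q
        simp only [hA₂, hF', mem_filter, mem_univ, true_and, Equiv.coe_fn_mk]
        have h : v + q.2 + (q.1 - q.2) = v + q.1 := by abel
        rw [h]
      have hNle : N.card ≤ 2 * F'.card := by
        calc N.card ≤ (F ∪ A₂).card := card_le_card hsub
          _ ≤ F.card + A₂.card := card_union_le _ _
          _ = 2 * F'.card := by omega
      omega
    -- C.card ≤ K * max fiber
    obtain ⟨y₀, -, hy₀⟩ := exists_max_image (univ : Finset G)
      (fun y => (S v (d (v + y) - d y)).card) ⟨0, mem_univ 0⟩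
    refine ⟨d (v + y₀) - d y₀, ?_⟩
    have hCle : C.card ≤ K * (S v (d (v + y₀) - d y₀)).card := by
      have hfib : C.card = ∑ y ∈ (univ : Finset G), ((C.filter fun q => q.2 = y)).card :=
        card_eq_sum_card_fiberwise (fun q _ => mem_univ q.2)
      have hfle : ∀ y : G, ((C.filter fun q => q.2 = y)).card
          ≤ (S v (d (v + y) - d y)).card := by
        intro y
        apply card_le_card_of_injOn (fun q => q.1)
        · intro q hq
          rw [mem_coe, mem_filter, hC, mem_filter] at hq
          obtain ⟨⟨-, hq1⟩, hq2⟩ := hq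
          simp only [hS, mem_coe, mem_filter, mem_univ, true_and]
          rw [← hq2]
          exact hq1
        · intro a ha b hb hab
          simp only [coe_filter, Set.mem_setOf_eq] at ha hb
          exact Prod.ext hab (ha.2.trans hb.2.symm)
      calc C.card = ∑ y ∈ (univ : Finset G), ((C.filter fun q => q.2 = y)).card := hfib
        _ ≤ ∑ y ∈ (univ : Finset G), (S v (d (v + y) - d y)).card :=
            Finset.sum_le_sum fun y _ => hfle y
        _ ≤ ∑ _y ∈ (univ : Finset G), (S v (d (v + y₀) - d y₀)).card :=
            Finset.sum_le_sum fun y _ => hy₀ y (mem_univ y)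
        _ = K * (S v (d (v + y₀) - d y₀)).card := by rw [Finset.sum_const, card_univ]; ring
    omega
  choose g hg using hA
  have hbig : ∀ v : G, 2 * K < 3 * (S v (g v)).card := by
    intro v
    have h := hg v
    have h1 : K * (2 * K) < K * (3 * (S v (g v)).card) := by nlinarith [sq_nonneg K]
    exact lt_of_mul_lt_mul_left h1 (Nat.zero_le K)
  have hcardle : ∀ A : Finset G, A.card ≤ K := fun A => by
    simpa [card_univ] using card_le_card (subset_univ A)
  have hadd : ∀ u v : G, g u + g v = g (u + v) := by
    intro u v
    set W₂ : Finset G := univ.filter fun w => d (u + v + w) - d (u + w) = g v with hW₂def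
    have hW₂ : W₂.card = (S v (g v)).card := by
      apply card_equiv (Equiv.addLeft u)
      intro w
      simp only [hW₂def, hS, mem_filter, mem_univ, true_and, Equiv.coe_addLeft]
      have h : v + (u + w) = u + v + w := by abel
      rw [h]
    have hne : (S u (g u) ∩ W₂ ∩ S (u + v) (g (u + v))).Nonempty := by
      rw [← card_pos]
      have i1 := card_union_add_card_inter (S u (g u)) W₂
      have i2 := card_union_add_card_inter (S u (g u) ∩ W₂) (S (u + v) (g (u + v)))
      have u1 := hcardle (S u (g u) ∪ W₂)
      have u2 := hcardle ((S u (g u) ∩ W₂) ∪ S (u + v) (g (u + v)))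
      have b1 := hbig u; have b2 := hbig v; have b3 := hbig (u + v)
      omega
    obtain ⟨w, hw⟩ := hne
    simp only [mem_inter, hS, hW₂def, mem_filter, mem_univ, true_and] at hw
    obtain ⟨⟨e1, e2⟩, e3⟩ := hw
    omega
  have g0 : g 0 = 0 := by
    have h := hadd 0 0
    rw [add_zero] at h
    omega
  have gzero : ∀ x : G, g x = 0 := by
    have gsmul : ∀ (k : ℕ) (x : G), g (k • x) = k * g x := by
      intro k x
      induction k with
      | zero => simpa using g0
      | succ k ih =>
        have h := hadd (k • x) x
        rw [succ_nsmul, ← h, ih]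
        push_cast; ring
    intro x
    have h := gsmul K x
    rw [hKdef, card_nsmul_eq_zero, g0] at h
    have hK0 : (K : ℤ) ≠ 0 := by exact_mod_cast hKpos.ne'
    rcases mul_eq_zero.mp h.symm with h' | h'
    · exact absurd h' hK0
    · exact h'
  -- final count
  set B : Finset G := univ.filter fun v => d v ≠ 0 with hBdef
  have hsum : ∑ v ∈ B, (S v 0).card ≤ F'.card := by
    have hdisj : ∀ v ∈ B, ∀ v' ∈ B, v ≠ v' →
        Disjoint ((S v 0).image fun w => (w, v)) ((S v' 0).image fun w => (w, v')) := by
      intro v _ v' _ hvv'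
      rw [Finset.disjoint_left]
      intro p hp hp'
      simp only [mem_image] at hp hp'
      obtain ⟨a, -, rfl⟩ := hp
      obtain ⟨b, -, hb⟩ := hp'
      exact hvv' ((Prod.ext_iff.mp hb.symm).2)
    have hsub : B.biUnion (fun v => (S v 0).image fun w => (w, v)) ⊆ F' := by
      intro p hp
      simp only [mem_biUnion, mem_image] at hp
      obtain ⟨v, hv, w, hw, rfl⟩ := hp
      simp only [hBdef, mem_filter, mem_univ, true_and] at hv
      simp only [hS, mem_filter, mem_univ, true_and] at hw
      simp only [hF', mem_filter, mem_univ, true_and]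
      have h : w + v = v + w := add_comm _ _
      rw [h]
      omega
    calc ∑ v ∈ B, (S v 0).card
        = ∑ v ∈ B, ((S v 0).image fun w => (w, v)).card := by
          refine Finset.sum_congr rfl fun v _ => ?_
          exact (card_image_of_injective _ (fun a b hab => (Prod.ext_iff.mp hab).1)).symm
      _ = (B.biUnion (fun v => (S v 0).image fun w => (w, v))).card := (card_biUnion hdisj).symm
      _ ≤ F'.card := card_le_card hsub
  have hperv : ∀ v ∈ B, K ^ 2 ≤ K * (S v 0).card + 2 * F'.card := by
    intro v _
    have h := hg v
    rwa [gzero v] at h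
  have hmain : B.card * K ^ 2 ≤ K * F'.card + B.card * (2 * F'.card) := by
    calc B.card * K ^ 2 = ∑ _v ∈ B, K ^ 2 := by rw [Finset.sum_const]; ring
      _ ≤ ∑ v ∈ B, (K * (S v 0).card + 2 * F'.card) := Finset.sum_le_sum hperv
      _ = K * (∑ v ∈ B, (S v 0).card) + B.card * (2 * F'.card) := by
          rw [Finset.sum_add_distrib, Finset.mul_sum, Finset.sum_const]; ring
      _ ≤ K * F'.card + B.card * (2 * F'.card) := by
          have := Nat.mul_le_mul_left K hsum
          omega
  -- conclude by integer arithmetic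
  have hBle : B.card ≤ K := hcardle B
  have goal' : K ^ 2 ≤ 10 * F'.card := by
    zify at hmain hB h6 hBle hKpos ⊢
    nlinarith [hmain, hB, h6, hBle, hKpos]
  omega

end BLR

theorem stmt_12 (n m : ℕ) (d : (Fin m → ZMod (2 ^ n)) → ℤ)
    (herr : ((Finset.univ.filter fun v : Fin m → ZMod (2 ^ n) => d v ≠ 0).card : ℝ) ≥
      2 ^ (m * n) / 8) :
    (1 - ((Finset.univ.filter fun v : Fin m → ZMod (2 ^ n) => d v + d (-v) ≠ 0).card : ℝ) /
        2 ^ (m * n)) ^ 96 *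
      (1 - ((Finset.univ.filter fun p : (Fin m → ZMod (2 ^ n)) × (Fin m → ZMod (2 ^ n)) =>
          d p.2 + d (p.1 - p.2) ≠ d p.1).card : ℝ) / (2 ^ (m * n)) ^ 2) ^ 709 ≤ 1 / 4 := by
  classical
  haveI : NeZero (2 ^ n) := ⟨by positivity⟩
  have hcardV : Fintype.card (Fin m → ZMod (2 ^ n)) = 2 ^ (m * n) := by
    rw [Fintype.card_fun, ZMod.card, Fintype.card_fin, ← pow_mul, mul_comm]
  set c1 := (Finset.univ.filter fun v : Fin m → ZMod (2 ^ n) => d v + d (-v) ≠ 0).card with hc1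
  set cB := (Finset.univ.filter fun v : Fin m → ZMod (2 ^ n) => d v ≠ 0).card with hcB
  set cF := (Finset.univ.filter fun p : (Fin m → ZMod (2 ^ n)) × (Fin m → ZMod (2 ^ n)) => d p.2 + d (p.1 - p.2) ≠ d p.1).card with hcF
  have hBnat : Fintype.card (Fin m → ZMod (2 ^ n)) ≤ 8 * cB := by
    rw [hcardV]
    by_contra hcon
    push_neg at hcon
    have hc : ((8 * cB : ℕ) : ℝ) < ((2 ^ (m * n) : ℕ) : ℝ) := Nat.cast_lt.mpr hcon
    push_cast at hc
    linarith [herr]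
  have hkey := blr_key d hBnat
  rw [hcardV] at hkey
  have hc1le : c1 ≤ 2 ^ (m * n) := by
    have h := Finset.card_le_univ
      (Finset.univ.filter fun v : Fin m → ZMod (2 ^ n) => d v + d (-v) ≠ 0)
    rw [hcardV] at h
    exact h
  have hcFle : cF ≤ (2 ^ (m * n)) ^ 2 := by
    have := Finset.card_le_card (Finset.subset_univ
      (Finset.univ.filter fun p : (Fin m → ZMod (2 ^ n)) × (Fin m → ZMod (2 ^ n)) => d p.2 + d (p.1 - p.2) ≠ d p.1))
    rw [Finset.card_univ, Fintype.card_prod, hcardV] at this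
    calc cF ≤ 2 ^ (m * n) * 2 ^ (m * n) := this
      _ = (2 ^ (m * n)) ^ 2 := (sq _).symm
  have hKpos : (0 : ℝ) < 2 ^ (m * n) := by positivity
  set x := (c1 : ℝ) / 2 ^ (m * n) with hx
  set y := (cF : ℝ) / (2 ^ (m * n)) ^ 2 with hy
  have hx0 : 0 ≤ x := by positivity
  have hx1 : x ≤ 1 := by
    rw [hx, div_le_one hKpos]
    have h := (Nat.cast_le (α := ℝ)).mpr hc1le
    push_cast at h
    linarith
  have hy1 : y ≤ 1 := by
    rw [hy, div_le_one (by positivity)]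
    calc (cF : ℝ) ≤ ((2 ^ (m * n)) ^ 2 : ℕ) := Nat.cast_le.mpr hcFle
      _ = (2 ^ (m * n)) ^ 2 := by push_cast; ring
  have hy10 : (1 : ℝ) / 10 ≤ y := by
    rw [hy, le_div_iff₀ (by positivity)]
    have : ((2 ^ (m * n)) ^ 2 : ℝ) ≤ 10 * cF := by
      calc ((2 ^ (m * n)) ^ 2 : ℝ) = (((2 ^ (m * n)) ^ 2 : ℕ) : ℝ) := by push_cast; ring
        _ ≤ ((10 * cF : ℕ) : ℝ) := Nat.cast_le.mpr hkey
        _ = 10 * cF := by push_cast; ring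
    linarith
  have h1 : (1 - x) ^ 96 ≤ 1 := pow_le_one₀ (by linarith) (by linarith)
  have h2 : (1 - y) ^ 709 ≤ (9 / 10 : ℝ) ^ 709 :=
    pow_le_pow_left₀ (by linarith) (by linarith) _
  have h3 : (9 / 10 : ℝ) ^ 709 ≤ (9 / 10 : ℝ) ^ 14 :=
    pow_le_pow_of_le_one (by norm_num) (by norm_num) (by norm_num)
  have h4 : (9 / 10 : ℝ) ^ 14 ≤ 1 / 4 := by norm_num
  calc (1 - x) ^ 96 * (1 - y) ^ 709
      ≤ 1 * (1 - y) ^ 709 := by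
        apply mul_le_mul_of_nonneg_right h1 (pow_nonneg (by linarith) _)
    _ = (1 - y) ^ 709 := one_mul _
    _ ≤ (9 / 10 : ℝ) ^ 709 := h2
    _ ≤ (9 / 10 : ℝ) ^ 14 := h3
    _ ≤ 1 / 4 := h4
end
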